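/- arXiv:2303.16441 — 3 statements merged into one kernel-verified Lean document; each statement's English description precedes it below -/
import Mathlib

section
/- For every w ∈ ℝⁿ (not necessarily with coordinates in Γ), the tilted algebra R[M]^w is the union of the tilted algebras R[M]^P, where P ranges over all Γ-rational polytopes containing w; that is, R[M]^w = ⋃_{P ∋ w} R[M]^P. -/
open scoped BigOperators

/-- A real-valued nonarchimedean valuation on a field `K`, written additively with
values in `ℝ ∪ {∞}`. -/
structure NAVal (K : Type*) [Field K] where
  v : K → WithTop ℝ
  v_eq_top_iff : ∀ a : K, v a = ⊤ ↔ a = 0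
  v_mul : ∀ a b : K, v (a * b) = v a + v b
  v_add : ∀ a b : K, min (v a) (v b) ≤ v (a + b)

/-- The valuation is nontrivial. -/
def NAVal.IsNontrivial {K : Type*} [Field K] (ν : NAVal K) : Prop :=
  ∃ a : K, ν.v a ≠ 0 ∧ ν.v a ≠ ⊤

/-- The value group `Γ = val(K×) ⊆ ℝ`. -/
def NAVal.valueGroup {K : Type*} [Field K] (ν : NAVal K) : Set ℝ :=
  {γ : ℝ | ∃ a : K, a ≠ 0 ∧ ν.v a = (γ : WithTop ℝ)}

/-- The standard pairing `⟨u, x⟩` between `u ∈ ℤⁿ` and `x ∈ ℝⁿ`. -/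
def pairing {n : ℕ} (u : Fin n → ℤ) (x : Fin n → ℝ) : ℝ :=
  ∑ i, (u i : ℝ) * x i

/-- The tilted algebra `R[M]^S ⊆ K[M]`: Laurent polynomials `f = Σ a_u χ^u` with
`val(a_u) + ⟨u, x⟩ ≥ 0` for all `u ∈ M` and all `x ∈ S`. -/
def tilted {K : Type*} [Field K] (ν : NAVal K) {n : ℕ} (S : Set (Fin n → ℝ)) :
    Set (AddMonoidAlgebra K (Fin n → ℤ)) :=
  {f | ∀ u : Fin n → ℤ, ∀ x ∈ S, (0 : WithTop ℝ) ≤ ν.v (f.coeff u) + ((pairing u x : ℝ) : WithTop ℝ)}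

/-- `P ⊆ ℝⁿ` is a `Γ`-rational polyhedron: a finite intersection of halfspaces
`{x : ⟨u, x⟩ ≥ γ}` with `u ∈ ℤⁿ` and `γ ∈ Γ`. -/
def IsGammaPolyhedron {K : Type*} [Field K] (ν : NAVal K) {n : ℕ}
    (P : Set (Fin n → ℝ)) : Prop :=
  ∃ (m : ℕ) (u : Fin m → Fin n → ℤ) (γ : Fin m → ℝ),
    (∀ i, γ i ∈ ν.valueGroup) ∧ P = {x | ∀ i, γ i ≤ pairing (u i) x}

/-- A `Γ`-rational polytope is a bounded `Γ`-rational polyhedron. -/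
def IsGammaPolytope {K : Type*} [Field K] (ν : NAVal K) {n : ℕ}
    (P : Set (Fin n → ℝ)) : Prop :=
  IsGammaPolyhedron ν P ∧ Bornology.IsBounded P

/-- The ideal `𝔪 · R[M]^S` of the tilted algebra: finite sums `Σ cᵢ • fᵢ` with
`val(cᵢ) > 0` and `fᵢ ∈ R[M]^S`. -/
def mSmulTilted {K : Type*} [Field K] (ν : NAVal K) {n : ℕ} (S : Set (Fin n → ℝ)) :
    Set (AddMonoidAlgebra K (Fin n → ℤ)) :=
  {f | ∃ (m : ℕ) (c : Fin m → K) (g : Fin m → AddMonoidAlgebra K (Fin n → ℤ)),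
    (∀ i, (0 : WithTop ℝ) < ν.v (c i)) ∧ (∀ i, g i ∈ tilted ν S) ∧
    f = ∑ i, c i • g i}

lemma NAVal.v_one' {K : Type*} [Field K] (ν : NAVal K) : ν.v 1 = 0 := by
  have h := ν.v_mul 1 1
  rw [mul_one] at h
  have hne : ν.v 1 ≠ ⊤ := fun ht => one_ne_zero ((ν.v_eq_top_iff 1).mp ht)
  lift ν.v 1 to ℝ using hne with c hc
  have h2 : c = c + c := by exact_mod_cast h
  have h3 : c = 0 := by linarith
  exact_mod_cast h3

lemma NAVal.v_inv' {K : Type*} [Field K] (ν : NAVal K) {a : K} (ha : a ≠ 0) {r : ℝ}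
    (hr : ν.v a = (r : WithTop ℝ)) : ν.v a⁻¹ = ((-r : ℝ) : WithTop ℝ) := by
  have h1 : ν.v (a * a⁻¹) = ν.v a + ν.v a⁻¹ := ν.v_mul _ _
  rw [mul_inv_cancel₀ ha, ν.v_one', hr] at h1
  cases hinv : ν.v a⁻¹ with
  | top => rw [hinv] at h1; simp at h1
  | coe s =>
    rw [hinv] at h1
    have h2 : (0 : ℝ) = r + s := by exact_mod_cast h1
    have : s = -r := by linarith
    exact_mod_cast congrArg (fun t : ℝ => ((t : WithTop ℝ))) this

lemma NAVal.v_pow' {K : Type*} [Field K] (ν : NAVal K) {a : K} {c : ℝ}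
    (hc : ν.v a = (c : WithTop ℝ)) : ∀ N : ℕ, ν.v (a ^ N) = (((N : ℝ) * c : ℝ) : WithTop ℝ)
  | 0 => by simp [ν.v_one']
  | N + 1 => by
    have h : ((N : ℝ) * c) + c = (((N + 1 : ℕ) : ℝ)) * c := by push_cast; ring
    rw [pow_succ, ν.v_mul, ν.v_pow' hc N, hc, ← WithTop.coe_add, h]

lemma NAVal.exists_mem_le {K : Type*} [Field K] (ν : NAVal K) (hnt : ν.IsNontrivial)
    (r : ℝ) : ∃ γ ∈ ν.valueGroup, γ ≤ r := by
  obtain ⟨a, h0, htop⟩ := hnt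
  have ha : a ≠ 0 := by
    intro h
    exact htop (by rw [h]; exact (ν.v_eq_top_iff 0).mpr rfl)
  lift ν.v a to ℝ using htop with c hc
  have hc0 : c ≠ 0 := by
    rintro rfl
    exact h0 (by exact_mod_cast rfl)
  obtain ⟨b, c', hb, hbv, hc'⟩ : ∃ (b : K) (c' : ℝ), b ≠ 0 ∧ ν.v b = (c' : WithTop ℝ) ∧ c' < 0 := by
    rcases lt_or_gt_of_ne hc0 with h | h
    · exact ⟨a, c, ha, hc.symm, h⟩
    · exact ⟨a⁻¹, -c, inv_ne_zero ha, ν.v_inv' ha hc.symm, by linarith⟩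
  obtain ⟨N, hN⟩ := exists_nat_gt (r / c')
  refine ⟨(N : ℝ) * c', ⟨b ^ N, pow_ne_zero _ hb, ν.v_pow' hbv N⟩, ?_⟩
  have := (div_lt_iff_of_neg hc').mp hN
  linarith

lemma pairing_single {n : ℕ} (i : Fin n) (x : Fin n → ℝ) :
    pairing (fun j => if j = i then 1 else 0) x = x i := by
  simp [pairing, apply_ite (fun z : ℤ => (z : ℝ)), ite_mul, Finset.sum_ite_eq']

lemma pairing_neg_single {n : ℕ} (i : Fin n) (x : Fin n → ℝ) :
    pairing (fun j => if j = i then -1 else 0) x = -x i := by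
  simp [pairing, apply_ite (fun z : ℤ => (z : ℝ)), ite_mul, Finset.sum_ite_eq']

/-- for every `w ∈ ℝⁿ`, `R[M]^w = ⋃_{P ∋ w} R[M]^P`, the union over
all `Γ`-rational polytopes `P` containing `w`. -/
theorem tilted_point_eq_iUnion_tilted_polytope {K : Type*} [Field K] [IsAlgClosed K]
    (ν : NAVal K) (hnt : ν.IsNontrivial) {n : ℕ} (hn : 1 ≤ n) (w : Fin n → ℝ) :
    tilted ν ({w} : Set (Fin n → ℝ)) =
      ⋃ P ∈ {P : Set (Fin n → ℝ) | IsGammaPolytope ν P ∧ w ∈ P}, tilted ν P := by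
  ext f
  simp only [Set.mem_iUnion, Set.mem_setOf_eq, exists_prop]
  constructor
  · intro hf
    -- pick a very negative element of the value group
    obtain ⟨γ0, hγ0mem, hγ0le⟩ := ν.exists_mem_le hnt (-(1 + ‖w‖))
    have hγ0w : ∀ i, γ0 ≤ w i ∧ γ0 ≤ -w i := by
      intro i
      have h1 : |w i| ≤ ‖w‖ := by
        have := norm_le_pi_norm w i
        rwa [Real.norm_eq_abs] at this
      have h2 := abs_le.mp h1
      constructor <;> [linarith [h2.1]; linarith [h2.2]]
    -- the real value of the valuation on a support coefficient
    have hval : ∀ u ∈ f.coeff.support, ∃ r : ℝ, ν.v (f.coeff u) = (r : WithTop ℝ) := by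
      intro u hu
      have hne : ν.v (f.coeff u) ≠ ⊤ := fun ht =>
        (Finsupp.mem_support_iff.mp hu) ((ν.v_eq_top_iff _).mp ht)
      lift ν.v (f.coeff u) to ℝ using hne with r hr
      exact ⟨r, rfl⟩
    choose rv hrv using hval
    -- the index type for the constraints
    set ι := {u : Fin n → ℤ // u ∈ f.coeff.support} ⊕ (Fin n ⊕ Fin n) with hι
    let cu : ι → (Fin n → ℤ) := fun i =>
      match i with
      | Sum.inl ⟨u, _⟩ => u
      | Sum.inr (Sum.inl i) => fun j => if j = i then 1 else 0
      | Sum.inr (Sum.inr i) => fun j => if j = i then -1 else 0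
    let cγ : ι → ℝ := fun i =>
      match i with
      | Sum.inl ⟨u, hu⟩ => -(rv u hu)
      | Sum.inr _ => γ0
    set P : Set (Fin n → ℝ) := {x | ∀ i : ι, cγ i ≤ pairing (cu i) x} with hP
    have hmem : ∀ i : ι, cγ i ∈ ν.valueGroup := by
      rintro (⟨u, hu⟩ | j)
      · exact ⟨(f.coeff u)⁻¹, inv_ne_zero (Finsupp.mem_support_iff.mp hu),
          ν.v_inv' (Finsupp.mem_support_iff.mp hu) (hrv u hu)⟩
      · exact hγ0mem
    refine ⟨P, ⟨⟨?_, ?_⟩, ?_⟩, ?_⟩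
    · -- polyhedron
      obtain ⟨e⟩ : Nonempty (Fin (Fintype.card ι) ≃ ι) := ⟨(Fintype.equivFin ι).symm⟩
      refine ⟨Fintype.card ι, cu ∘ e, cγ ∘ e, fun i => hmem (e i), ?_⟩
      ext x
      simp only [hP, Set.mem_setOf_eq, Function.comp]
      exact e.surjective.forall
    · -- bounded
      rw [isBounded_iff_forall_norm_le]
      refine ⟨-γ0, fun x hx => ?_⟩
      have hγ0neg : γ0 ≤ 0 := le_trans hγ0le (by linarith [norm_nonneg w])
      rw [pi_norm_le_iff_of_nonneg (by linarith)]
      intro i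
      have h1 := hx (Sum.inr (Sum.inl i))
      have h2 := hx (Sum.inr (Sum.inr i))
      rw [show cγ (Sum.inr (Sum.inl i)) = γ0 from rfl,
        show cu (Sum.inr (Sum.inl i)) = fun j => if j = i then 1 else 0 from rfl,
        pairing_single] at h1
      rw [show cγ (Sum.inr (Sum.inr i)) = γ0 from rfl,
        show cu (Sum.inr (Sum.inr i)) = fun j => if j = i then -1 else 0 from rfl,
        pairing_neg_single] at h2
      rw [Real.norm_eq_abs, abs_le]
      constructor <;> linarith
    · -- w ∈ P
      rintro (⟨u, hu⟩ | (j | j))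
      · have h := hf u w rfl
        rw [hrv u hu] at h
        have h2 : (0 : ℝ) ≤ rv u hu + pairing u w := by exact_mod_cast h
        show -(rv u hu) ≤ pairing u w
        linarith
      · show γ0 ≤ pairing (fun j' => if j' = j then 1 else 0) w
        rw [pairing_single]; exact (hγ0w j).1
      · show γ0 ≤ pairing (fun j' => if j' = j then -1 else 0) w
        rw [pairing_neg_single]; exact (hγ0w j).2
    · -- f ∈ tilted ν P
      intro u x hx
      by_cases hu : f.coeff u = 0
      · rw [hu, (ν.v_eq_top_iff 0).mpr rfl, top_add]
        exact le_top
      · have hu' : u ∈ f.coeff.support := Finsupp.mem_support_iff.mpr hu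
        have h1 := hx (Sum.inl ⟨u, hu'⟩)
        rw [show cγ (Sum.inl ⟨u, hu'⟩) = -(rv u hu') from rfl,
          show cu (Sum.inl ⟨u, hu'⟩) = u from rfl] at h1
        rw [hrv u hu']
        have h2 : (0 : ℝ) ≤ rv u hu' + pairing u x := by linarith
        exact_mod_cast h2
  · rintro ⟨P, ⟨_, hwP⟩, hfP⟩ u x hx
    rw [Set.mem_singleton_iff] at hx
    subst hx
    exact hfP u x hwP
end

section
/- For every w ∈ ℝⁿ and every f ∈ 𝔪·R[M]^w (the ideal of R[M]^w generated by elements of K of strictly positive valuation), there exists a Γ-rational polytope P with w ∈ P and f ∈ 𝔪·R[M]^P. -/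
open scoped BigOperators

section Helpers
variable {K : Type*} [Field K] (ν : NAVal K)

lemma NAVal.v_one'_s3 : ν.v 1 = 0 := by
  have h := ν.v_mul 1 1
  rw [one_mul] at h
  have hne : ν.v 1 ≠ ⊤ := by
    simp [ν.v_eq_top_iff]
  obtain ⟨r, hr⟩ := WithTop.ne_top_iff_exists.mp hne
  rw [← hr] at h ⊢
  have : r = r + r := by exact_mod_cast h
  have : r = 0 := by linarith
  simp [this]

lemma neg_mem_valueGroup {a : K} {γ : ℝ} (ha : a ≠ 0) (hv : ν.v a = (γ : WithTop ℝ)) :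
    -γ ∈ ν.valueGroup := by
  refine ⟨a⁻¹, inv_ne_zero ha, ?_⟩
  have h := ν.v_mul a a⁻¹
  rw [mul_inv_cancel₀ ha, ν.v_one'_s3, hv] at h
  obtain ⟨s, hs⟩ := WithTop.ne_top_iff_exists.mp
    (show ν.v a⁻¹ ≠ ⊤ by simp [ν.v_eq_top_iff, ha])
  rw [← hs] at h ⊢
  have : (0:ℝ) = γ + s := by exact_mod_cast h
  have : s = -γ := by linarith
  simp [this]

lemma v_pow {b : K} {γ : ℝ} (hb : b ≠ 0) (hv : ν.v b = (γ : WithTop ℝ)) (k : ℕ) :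
    ν.v (b ^ k) = ((k * γ : ℝ) : WithTop ℝ) := by
  induction k with
  | zero => simp [ν.v_one'_s3]
  | succ k ih =>
      rw [pow_succ, ν.v_mul, ih, hv, ← WithTop.coe_add]
      congr 1
      push_cast
      ring

lemma exists_small (hnt : ν.IsNontrivial) (B : ℝ) : ∃ γ ∈ ν.valueGroup, γ ≤ B := by
  obtain ⟨a, h0, htop⟩ := hnt
  have ha : a ≠ 0 := fun h => htop (by rw [h, ν.v_eq_top_iff])
  obtain ⟨r, hr⟩ := WithTop.ne_top_iff_exists.mp htop
  have hrne : r ≠ 0 := by rintro rfl; exact h0 hr.symm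
  -- get b with v b = c < 0
  obtain ⟨b, c, hbne, hvb, hc⟩ : ∃ (b : K) (c : ℝ), b ≠ 0 ∧ ν.v b = (c : WithTop ℝ) ∧ c < 0 := by
    rcases lt_or_gt_of_ne hrne with h | h
    · exact ⟨a, r, ha, hr.symm, h⟩
    · obtain ⟨b, hb1, hb2⟩ := neg_mem_valueGroup ν ha hr.symm
      exact ⟨b, -r, hb1, hb2, by linarith⟩
  obtain ⟨k, hk⟩ := exists_nat_ge (B / c)
  refine ⟨k * c, ⟨b ^ k, pow_ne_zero k hbne, v_pow ν hbne hvb k⟩, ?_⟩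
  have := mul_le_mul_of_nonpos_left hk (le_of_lt hc)
  calc (k:ℝ) * c = c * k := by ring
    _ ≤ c * (B / c) := this
    _ = B := by rw [mul_comm, div_mul_cancel₀ B hc.ne]

lemma pairing_pos {n : ℕ} (j : Fin n) (x : Fin n → ℝ) :
    pairing (fun k => if k = j then 1 else 0) x = x j := by
  simp [pairing, apply_ite (fun z : ℤ => (z : ℝ)), ite_mul]

lemma pairing_neg {n : ℕ} (j : Fin n) (x : Fin n → ℝ) :
    pairing (fun k => if k = j then -1 else 0) x = -x j := by
  simp [pairing, apply_ite (fun z : ℤ => (z : ℝ)), ite_mul]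
end Helpers

/-- for every `w ∈ ℝⁿ` and every `f ∈ 𝔪·R[M]^w`, there is a
`Γ`-rational polytope `P` with `w ∈ P` and `f ∈ 𝔪·R[M]^P`. -/
theorem mem_mSmulTilted_polytope_of_mem_mSmulTilted_point {K : Type*} [Field K]
    [IsAlgClosed K] (ν : NAVal K) (hnt : ν.IsNontrivial) {n : ℕ} (hn : 1 ≤ n)
    (w : Fin n → ℝ) (f : AddMonoidAlgebra K (Fin n → ℤ))
    (hf : f ∈ mSmulTilted ν ({w} : Set (Fin n → ℝ))) :
    ∃ P : Set (Fin n → ℝ), IsGammaPolytope ν P ∧ w ∈ P ∧ f ∈ mSmulTilted ν P := by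
  obtain ⟨m, c, g, hc, hg, hfeq⟩ := hf
  have hne : Nonempty (Fin n) := ⟨⟨0, hn⟩⟩
  -- a small element of the value group
  obtain ⟨γ₀, hγ₀mem, hγ₀le⟩ := exists_small ν hnt
    (Finset.univ.inf' Finset.univ_nonempty (fun j : Fin n => min (w j) (-w j)))
  have hγ₀w : ∀ j : Fin n, γ₀ ≤ w j ∧ γ₀ ≤ -w j := by
    intro j
    have h1 : Finset.univ.inf' Finset.univ_nonempty (fun j : Fin n => min (w j) (-w j)) ≤
        min (w j) (-w j) := Finset.inf'_le _ (Finset.mem_univ j)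
    exact ⟨hγ₀le.trans (h1.trans (min_le_left _ _)),
      hγ₀le.trans (h1.trans (min_le_right _ _))⟩
  -- the index type of constraints
  let I := (Σ i : Fin m, {u : Fin n → ℤ // u ∈ (g i).coeff.support}) ⊕ (Fin n ⊕ Fin n)
  let U : I → Fin n → ℤ := fun i => match i with
    | .inl ⟨i, u⟩ => u.1
    | .inr (.inl j) => fun k => if k = j then 1 else 0
    | .inr (.inr j) => fun k => if k = j then -1 else 0
  let G : I → ℝ := fun i => match i with
    | .inl ⟨i, u⟩ => -(WithTop.untopD 0 (ν.v ((g i).coeff u.1)))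
    | .inr _ => γ₀
  -- for u in the support, the valuation is a real number, recovered by untop'
  have hval : ∀ (i : Fin m) (u : {u : Fin n → ℤ // u ∈ (g i).coeff.support}),
      ν.v ((g i).coeff u.1) = ((WithTop.untopD 0 (ν.v ((g i).coeff u.1)) : ℝ) : WithTop ℝ) := by
    intro i u
    have hne0 : (g i).coeff u.1 ≠ 0 := Finsupp.mem_support_iff.mp u.2
    have : ν.v ((g i).coeff u.1) ≠ ⊤ := fun h => hne0 ((ν.v_eq_top_iff _).mp h)
    obtain ⟨r, hr⟩ := WithTop.ne_top_iff_exists.mp this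
    rw [← hr, WithTop.untopD_coe]
  set P : Set (Fin n → ℝ) := {x | ∀ i : I, G i ≤ pairing (U i) x} with hP
  have hwP : w ∈ P := by
    intro i
    match i with
    | .inl ⟨i, u⟩ =>
        have h := hg i u.1 w rfl
        rw [hval i u, ← WithTop.coe_add] at h
        have h' : (0 : ℝ) ≤ WithTop.untopD 0 (ν.v ((g i).coeff u.1)) + pairing u.1 w := by
          exact_mod_cast h
        show -(WithTop.untopD 0 (ν.v ((g i).coeff u.1))) ≤ pairing u.1 w
        linarith
    | .inr (.inl j) =>
        show γ₀ ≤ pairing _ w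
        rw [pairing_pos]
        exact (hγ₀w j).1
    | .inr (.inr j) =>
        show γ₀ ≤ pairing _ w
        rw [pairing_neg]
        exact (hγ₀w j).2
  refine ⟨P, ⟨?_, ?_⟩, hwP, ?_⟩
  · -- polyhedron
    let e : Fin (Fintype.card I) ≃ I := (Fintype.equivFin I).symm
    refine ⟨Fintype.card I, U ∘ e, G ∘ e, ?_, ?_⟩
    · intro k
      match hk : e k with
      | .inl ⟨i, u⟩ =>
          show G (e k) ∈ ν.valueGroup
          rw [hk]
          have hne0 : (g i).coeff u.1 ≠ 0 := Finsupp.mem_support_iff.mp u.2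
          exact neg_mem_valueGroup ν hne0 (hval i u)
      | .inr j =>
          show G (e k) ∈ ν.valueGroup
          rw [hk]
          exact hγ₀mem
    · ext x
      constructor
      · intro hx k
        exact hx (e k)
      · intro hx i
        have := hx (e.symm i)
        simpa using this
  · -- bounded
    have hsub : P ⊆ Set.pi Set.univ (fun _ : Fin n => Set.Icc γ₀ (-γ₀)) := by
      intro x hx j _
      have h1 : γ₀ ≤ x j := by
        have := hx (.inr (.inl j))
        rwa [show pairing (U (.inr (.inl j))) x = x j from pairing_pos j x] at this
      have h2 : γ₀ ≤ -x j := by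
        have := hx (.inr (.inr j))
        rwa [show pairing (U (.inr (.inr j))) x = -x j from pairing_neg j x] at this
      exact ⟨h1, by linarith⟩
    exact (Bornology.IsBounded.pi (fun _ => Metric.isBounded_Icc _ _)).subset hsub
  · -- f ∈ mSmulTilted ν P
    refine ⟨m, c, g, hc, ?_, hfeq⟩
    intro i u x hx
    by_cases h0 : (g i).coeff u = 0
    · rw [h0]
      have : ν.v (0 : K) = ⊤ := (ν.v_eq_top_iff 0).mpr rfl
      rw [this]
      simp
    · have hu : u ∈ (g i).coeff.support := Finsupp.mem_support_iff.mpr h0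
      have := hx (.inl ⟨i, ⟨u, hu⟩⟩)
      have hpl : -(WithTop.untopD 0 (ν.v ((g i).coeff u))) ≤ pairing u x := this
      rw [hval i ⟨u, hu⟩, ← WithTop.coe_add]
      exact_mod_cast (by linarith : (0:ℝ) ≤ WithTop.untopD 0 (ν.v ((g i).coeff u)) + pairing u x)
end

section
/- For every w ∈ ℝⁿ, the ideal 𝔪·R[M]^w equals the set of all f = Σ_u a_u χ^u ∈ K[M] such that val(a_u) + ⟨u,w⟩ > 0 for every u in the support of f. -/
open scoped BigOperators

namespace NAVal
variable {K : Type*} [Field K] (ν : NAVal K)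

lemma v_zero : ν.v 0 = ⊤ := (ν.v_eq_top_iff 0).2 rfl

lemma v_ne_top {a : K} (ha : a ≠ 0) : ν.v a ≠ ⊤ := by
  exact fun h => ha ((ν.v_eq_top_iff a).1 h)

lemma v_one : ν.v 1 = 0 := by
  have h := ν.v_mul 1 1
  rw [mul_one] at h
  have hne : ν.v 1 ≠ ⊤ := ν.v_ne_top one_ne_zero
  lift ν.v 1 to ℝ using hne with r hr
  have h' : r = r + r := by exact_mod_cast h
  have : r = 0 := by linarith
  rw [this]; norm_num

lemma v_sum_pos {ι : Type*} (s : Finset ι) (a : ι → K) (t : WithTop ℝ)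
    (h : ∀ i ∈ s, 0 < ν.v (a i) + t) : 0 < ν.v (∑ i ∈ s, a i) + t := by
  induction s using Finset.cons_induction with
  | empty => simp [ν.v_zero]
  | cons x s' hx ih =>
      rw [Finset.sum_cons]
      have h1 := h x (Finset.mem_cons_self x s')
      have h2 := ih (fun i hi => h _ (Finset.mem_cons_of_mem hi))
      have hmin : min (ν.v (a x)) (ν.v (∑ i ∈ s', a i)) + t
          ≤ ν.v (a x + ∑ i ∈ s', a i) + t := add_le_add_left (ν.v_add _ _) t
      rcases min_cases (ν.v (a x)) (ν.v (∑ i ∈ s', a i)) with ⟨he, _⟩ | ⟨he, _⟩ <;>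
        rw [he] at hmin
      · exact lt_of_lt_of_le h1 hmin
      · exact lt_of_lt_of_le h2 hmin

lemma exists_posval (hnt : ν.IsNontrivial) :
    ∃ (b : K) (δ : ℝ), 0 < δ ∧ ν.v b = (δ : WithTop ℝ) := by
  obtain ⟨a, h0, htop⟩ := hnt
  have ha : a ≠ 0 := fun h => htop (by rw [h, ν.v_zero])
  lift ν.v a to ℝ using htop with r hr
  have hr0 : r ≠ 0 := by exact_mod_cast h0
  rcases hr0.lt_or_gt with hneg | hpos
  · have hinv : a⁻¹ ≠ 0 := inv_ne_zero ha
    have hmul : ν.v (a * a⁻¹) = (r : WithTop ℝ) + ν.v a⁻¹ := by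
      rw [ν.v_mul, hr]
    rw [mul_inv_cancel₀ ha, ν.v_one] at hmul
    have hvt : ν.v a⁻¹ ≠ ⊤ := ν.v_ne_top hinv
    lift ν.v a⁻¹ to ℝ using hvt with s hs
    have hrs : (0 : ℝ) = r + s := by exact_mod_cast hmul
    exact ⟨a⁻¹, s, by linarith, hs.symm⟩
  · exact ⟨a, r, hpos, hr.symm⟩

lemma v_pow {c : K} {s : ℝ} (hc : ν.v c = (s : WithTop ℝ)) (k : ℕ) :
    ν.v (c ^ k) = ((k * s : ℝ) : WithTop ℝ) := by
  induction k with
  | zero => simp [ν.v_one]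
  | succ k ih =>
      rw [pow_succ, ν.v_mul, ih, hc, ← WithTop.coe_add]
      congr 1
      push_cast
      ring

lemma exists_small [IsAlgClosed K] (hnt : ν.IsNontrivial) (ε : WithTop ℝ) (hε : 0 < ε) :
    ∃ c : K, c ≠ 0 ∧ 0 < ν.v c ∧ ν.v c ≤ ε := by
  obtain ⟨b, δ, hδ, hb⟩ := ν.exists_posval hnt
  have hbne : b ≠ 0 := fun h => by rw [h, ν.v_zero] at hb; exact WithTop.top_ne_coe hb
  induction ε using WithTop.recTopCoe with
  | top =>
      exact ⟨b, hbne, by rw [hb]; exact_mod_cast hδ, le_top⟩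
  | coe μ =>
      have hμ : (0 : ℝ) < μ := by exact_mod_cast hε
      obtain ⟨k, hk⟩ := exists_nat_ge (δ / μ)
      obtain ⟨c, hc⟩ := IsAlgClosed.exists_pow_nat_eq b (n := k + 1) (Nat.succ_pos k)
      have hcne : c ≠ 0 := by
        intro h; rw [h] at hc; simp [Nat.succ_ne_zero] at hc; exact hbne hc.symm
      have hvt : ν.v c ≠ ⊤ := ν.v_ne_top hcne
      lift ν.v c to ℝ using hvt with s hs
      have hpow := ν.v_pow hs.symm (k + 1)
      rw [hc, hb] at hpow
      have hks : δ = ((k:ℝ) + 1) * s := by exact_mod_cast hpow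
      have hk1 : (0:ℝ) < (k:ℝ) + 1 := by positivity
      have hspos : 0 < s := by nlinarith
      have hsle : s ≤ μ := by
        have : δ ≤ ((k:ℝ) + 1) * μ := by
          have h1 : δ / μ ≤ (k:ℝ) + 1 := by linarith
          calc δ = (δ/μ) * μ := by field_simp
            _ ≤ ((k:ℝ)+1) * μ := by nlinarith
        nlinarith
      refine ⟨c, hcne, ?_, ?_⟩ <;> rw [← hs]
      · exact_mod_cast hspos
      · exact_mod_cast hsle
end NAVal

/-- for every `w ∈ ℝⁿ`, the ideal `𝔪·R[M]^w` equals the set of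
`f = Σ a_u χ^u` with `val(a_u) + ⟨u, w⟩ > 0` for every `u` in the support of `f`. -/
theorem mSmulTilted_point_eq {K : Type*} [Field K] [IsAlgClosed K]
    (ν : NAVal K) (hnt : ν.IsNontrivial) {n : ℕ} (hn : 1 ≤ n) (w : Fin n → ℝ) :
    mSmulTilted ν ({w} : Set (Fin n → ℝ)) =
      {f : AddMonoidAlgebra K (Fin n → ℤ) | ∀ u ∈ f.coeff.support,
        (0 : WithTop ℝ) < ν.v (f.coeff u) + ((pairing u w : ℝ) : WithTop ℝ)} := by
  ext f
  constructor
  · rintro ⟨m, c, g, hc, hg, rfl⟩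
    intro u _
    have happ : (∑ i, c i • g i).coeff u = ∑ i, c i * (g i).coeff u := by
      rw [AddMonoidAlgebra.coeff_sum, Finsupp.finset_sum_apply]
      exact Finset.sum_congr rfl fun i _ => rfl
    rw [happ]
    apply ν.v_sum_pos
    intro i _
    rw [ν.v_mul, add_assoc]
    have h1 : (0 : WithTop ℝ) ≤ ν.v ((g i).coeff u) + ((pairing u w : ℝ) : WithTop ℝ) :=
      hg i u w rfl
    exact lt_of_lt_of_le (hc i) (le_add_of_nonneg_right h1)
  · intro hf
    by_cases hf0 : f = 0
    · exact ⟨0, Fin.elim0, Fin.elim0, fun i => i.elim0, fun i => i.elim0, by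
        simp [hf0]⟩
    · have hne : f.coeff.support.Nonempty := Finsupp.support_nonempty_iff.2 (fun h => hf0 (AddMonoidAlgebra.coeff_eq_zero.1 h))
      set E : WithTop ℝ :=
        f.coeff.support.inf' hne (fun u => ν.v (f.coeff u) + ((pairing u w : ℝ) : WithTop ℝ)) with hE
      have hEpos : 0 < E := by
        rw [hE, Finset.lt_inf'_iff]
        exact hf
      obtain ⟨c, hc0, hcpos, hcle⟩ := ν.exists_small hnt E hEpos
      refine ⟨1, fun _ => c, fun _ => c⁻¹ • f, fun _ => hcpos, fun _ => ?_, ?_⟩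
      · intro u x hx
        rw [Set.mem_singleton_iff] at hx
        rw [hx]
        by_cases hfu : f.coeff u = 0
        · have h0 : (c⁻¹ • f).coeff u = c⁻¹ * f.coeff u := rfl
          rw [h0, hfu, mul_zero, ν.v_zero]
          exact le_top
        · have hu : u ∈ f.coeff.support := Finsupp.mem_support_iff.2 hfu
          have hle : ν.v c ≤ ν.v (f.coeff u) + ((pairing u w : ℝ) : WithTop ℝ) :=
            le_trans hcle (Finset.inf'_le _ hu)
          have hgu : (c⁻¹ • f).coeff u = c⁻¹ * f.coeff u := rfl
          have heq : ν.v (f.coeff u) = ν.v c + ν.v (c⁻¹ * f.coeff u) := by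
            rw [← ν.v_mul, ← mul_assoc, mul_inv_cancel₀ hc0, one_mul]
          have hct : ν.v c ≠ ⊤ := ν.v_ne_top hc0
          have hft : ν.v (f.coeff u) ≠ ⊤ := ν.v_ne_top hfu
          have hgt : ν.v (c⁻¹ * f.coeff u) ≠ ⊤ := ν.v_ne_top (by
            intro h
            apply hfu
            have := congrArg (fun y => c * y) h
            simpa [← mul_assoc, mul_inv_cancel₀ hc0] using this)
          rw [hgu]
          lift ν.v c to ℝ using hct with s hs
          lift ν.v (f.coeff u) to ℝ using hft with α hα
          lift ν.v (c⁻¹ * f.coeff u) to ℝ using hgt with β hβ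
          have heq' : α = s + β := by exact_mod_cast heq
          have hle' : s ≤ α + pairing u w := by exact_mod_cast hle
          have : (0:ℝ) ≤ β + pairing u w := by linarith
          exact_mod_cast this
      · simp [smul_smul, mul_inv_cancel₀ hc0]
end
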